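/- arXiv:1708.07620 — 2 statements merged into one kernel-verified Lean document; each statement's English description precedes it below -/
import Mathlib

section
/- Under the SETUP, let r_c ∈ (0,∞) be such that the closed ball B(0, r_c) ⊆ ∩_{i∈V} X_i. Then every minimizer w* of D over S^⊥ satisfies ‖w*‖ ≤ ((Σ_{i∈V} max_{x∈B(0,r_c)} f_i(x)) − F*)/r_c < ∞. -/
noncomputable section

open scoped BigOperators

abbrev Evec (d : ℕ) := EuclideanSpace ℝ (Fin d)
abbrev ENvec (n d : ℕ) := PiLp 2 (fun _ : Fin n => EuclideanSpace ℝ (Fin d))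

/-- Real inner product on `ℝ^d`. -/
def ip {d : ℕ} (x y : Evec d) : ℝ := inner ℝ x y

/-- Real inner product on `ℝ^{nd}`. -/
def ipN {n d : ℕ} (x y : ENvec n d) : ℝ := inner ℝ x y

/-- `g` is a subgradient of `f` at `x`. -/
def IsSubgradientAt {d : ℕ} (f : Evec d → ℝ) (g x : Evec d) : Prop :=
  ∀ y, f x + ip g (y - x) ≤ f y

/-- `f` is strongly convex on `X` with parameter `θ`. -/
def StrongConvexOnWith {d : ℕ} (X : Set (Evec d)) (θ : ℝ) (f : Evec d → ℝ) : Prop :=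
  ∀ x ∈ X, ∀ y ∈ X, ∀ g, IsSubgradientAt f g x →
    θ / 2 * ‖y - x‖ ^ 2 ≤ f y - f x - ip g (y - x)

structure Setup (n d : ℕ) : Type where
  hn : 2 ≤ n
  hd : 1 ≤ d
  X : Fin n → Set (Evec d)
  f : Fin n → Evec d → ℝ
  θ : Fin n → ℝ
  hθ : ∀ i, 0 < θ i
  hXne : ∀ i, (X i).Nonempty
  hXclosed : ∀ i, IsClosed (X i)
  hXconv : ∀ i, Convex ℝ (X i)
  hfconv : ∀ i, ConvexOn ℝ Set.univ (f i)
  hstrong : ∀ i, StrongConvexOnWith (X i) (θ i) (f i)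
  hzero : (0 : Evec d) ∈ interior (⋂ i, X i)
  xt : Fin n → Evec d → Evec d
  hxt_mem : ∀ i w, xt i w ∈ X i
  hxt_max : ∀ i w, ∀ x ∈ X i, ip w x - f i x ≤ ip w (xt i w) - f i (xt i w)
  hxt_uniq : ∀ i w x, x ∈ X i →
    ip w x - f i x = ip w (xt i w) - f i (xt i w) → x = xt i w
  xstar : Evec d
  hxstar_mem : xstar ∈ ⋂ i, X i
  hxstar_min : ∀ x ∈ ⋂ i, X i, (∑ i, f i xstar) ≤ ∑ i, f i x

namespace Setup

variable {n d : ℕ} (P : Setup n d)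

/-- Lipschitz constants `L_i = 1/θ_i`. -/
def Lip (i : Fin n) : ℝ := 1 / P.θ i

/-- `L = max_i L_i`. -/
def Lmax : ℝ := ⨆ i, P.Lip i

/-- The conjugate function `d_i`. -/
def dconj (i : Fin n) (w : Evec d) : ℝ := ip w (P.xt i w) - P.f i (P.xt i w)

/-- The Fenchel dual function `D`. -/
def D (w : ENvec n d) : ℝ := ∑ i, P.dconj i (w i)

/-- The map `x̃ = ∇D`. -/
def xtv (w : ENvec n d) : ENvec n d := WithLp.toLp 2 (fun i => P.xt i (w i))

/-- The primal objective `F`. -/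
def Fobj (x : ENvec n d) : ℝ := ∑ i, P.f i (x i)

/-- The optimal primal value. -/
def Fstar : ℝ := ∑ i, P.f i P.xstar

/-- The primal optimum `𝐱* = (x*, …, x*)`. -/
def xstarv : ENvec n d := WithLp.toLp 2 (fun _ => P.xstar)

end Setup

/-- The subspace `S^⊥ = {w : w_1 + ⋯ + w_n = 0}`. -/
def Sperp (n d : ℕ) : Submodule ℝ (ENvec n d) where
  carrier := {w | ∑ i, w i = 0}
  add_mem' := by
    intro a b ha hb
    simp only [Set.mem_setOf_eq] at ha hb ⊢
    calc ∑ i, (a + b) i = ∑ i, (a i + b i) := rfl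
    _ = (∑ i, a i) + ∑ i, b i := Finset.sum_add_distrib
    _ = 0 := by rw [ha, hb, add_zero]
  zero_mem' := by
    simp only [Set.mem_setOf_eq]
    calc ∑ i, (0 : ENvec n d) i = ∑ _i : Fin n, (0 : Evec d) := rfl
    _ = 0 := by simp
  smul_mem' := by
    intro c a ha
    simp only [Set.mem_setOf_eq] at ha ⊢
    calc ∑ i, (c • a) i = ∑ i, c • a i := rfl
    _ = c • ∑ i, a i := Finset.smul_sum.symm
    _ = 0 := by rw [ha, smul_zero]

/-- Orthogonal projection onto `S^⊥`. -/
def projSperp {n d : ℕ} (x : ENvec n d) : ENvec n d :=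
  ((Sperp n d).orthogonalProjection x : ENvec n d)

namespace Setup

variable {n d : ℕ} (P : Setup n d)

/-- The optimal dual value `D* = min_{w ∈ S^⊥} D(w)`. -/
def Dstar : ℝ := sInf (P.D '' (Sperp n d : Set (ENvec n d)))

end Setup

/-- Block action of `H ⊗ I_d` on `ℝ^{nd}`. -/
def blockMul {n d : ℕ} (H : Matrix (Fin n) (Fin n) ℝ) (w : ENvec n d) : ENvec n d :=
  WithLp.toLp 2 (fun i => ∑ j, H i j • w j)

/-- A time-varying sequence of weighted undirected graphs. -/
structure GraphSeq (n : ℕ) : Type where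
  adj : ℕ → Fin n → Fin n → Bool
  adj_symm : ∀ k i j, adj k i j = adj k j i
  adj_irrefl : ∀ k i, adj k i i = false
  adj_ne : ∀ k, ∃ i j, adj k i j = true
  h : ℕ → Fin n → Fin n → ℝ
  h_symm : ∀ k i j, h k i j = h k j i
  hlow : ℝ
  hhigh : ℝ
  hlow_pos : 0 < hlow
  h_mem : ∀ k i j, adj k i j = true → h k i j ∈ Set.Icc hlow hhigh

namespace GraphSeq

variable {n : ℕ} (Gs : GraphSeq n)

/-- The weight matrix `H_{G^k}`. -/
def H (k : ℕ) : Matrix (Fin n) (Fin n) ℝ :=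
  Matrix.of fun i j =>
    if i = j then ∑ l, (if Gs.adj k i l = true then Gs.h k i l else 0)
    else if Gs.adj k i j = true then -(Gs.h k i j) else 0

end GraphSeq

/-- The Fenchel dual gradient algorithm: step sizes, iterates, and their defining relations. -/
structure Algo (n d : ℕ) (P : Setup n d) (Gs : GraphSeq n) : Type where
  δ : ℝ
  hδ_pos : 0 < δ
  hδ : ∀ k, (δ • Matrix.diagonal (fun i => (P.Lip i)⁻¹) - Gs.H k).PosSemidef
  αlo : ℝ
  αhi : ℝ
  hαlo : 0 < αlo
  hαhi : αhi < 2 / δ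
  α : ℕ → ℝ
  hα : ∀ k, α k ∈ Set.Icc αlo αhi
  w : ℕ → ENvec n d
  hw0 : w 0 ∈ Sperp n d
  hrec : ∀ k, w (k + 1) = w k - α k • blockMul (Gs.H k) (P.xtv (w k))

namespace Algo

variable {n d : ℕ} {P : Setup n d} {Gs : GraphSeq n} (A : Algo n d P Gs)

/-- Primal iterates `x^k = ∇D(w^k)`. -/
def x (k : ℕ) : ENvec n d := P.xtv (A.w k)

/-- The constant `ρ = min{α̲ − α̲²δ/2, ᾱ − ᾱ²δ/2}`. -/
def ρ : ℝ := min (A.αlo - A.αlo ^ 2 * A.δ / 2) (A.αhi - A.αhi ^ 2 * A.δ / 2)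

end Algo


section Aux

lemma subgrad_exists {d : ℕ} {f : Evec d → ℝ} (hf : ConvexOn ℝ Set.univ f) (x : Evec d) :
    ∃ g, IsSubgradientAt f g x := by
  have hcont : Continuous f := hf.locallyLipschitz.continuous
  set s : Set (Evec d × ℝ) := {p | f p.1 < p.2} with hs
  have hsconv : Convex ℝ s := by
    intro p hp q hq a b ha hb hab
    simp only [hs, Set.mem_setOf_eq] at *
    calc f (a • p.1 + b • q.1) ≤ a * f p.1 + b * f q.1 :=
          hf.2 (Set.mem_univ _) (Set.mem_univ _) ha hb hab
    _ < a * p.2 + b * q.2 := by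
        rcases eq_or_lt_of_le ha with h | h
        · simp only [← h, zero_mul, zero_add] at hab ⊢
          rw [hab]; simpa using hq
        · rcases eq_or_lt_of_le hb with h2 | h2
          · simp only [← h2, zero_mul, add_zero] at hab ⊢
            rw [hab]; simpa using hp
          · exact add_lt_add (by nlinarith) (by nlinarith)
  have hsopen : IsOpen s := by
    have : s = (fun p : Evec d × ℝ => p.2 - f p.1) ⁻¹' Set.Ioi 0 := by
      ext p; simp [hs, sub_pos]
    rw [this]
    exact (continuous_snd.sub (hcont.comp continuous_fst)).isOpen_preimage _ isOpen_Ioi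
  have hxs : (x, f x) ∉ s := by simp [hs]
  obtain ⟨ℓ, hℓ⟩ := geometric_hahn_banach_open_point hsconv hsopen hxs
  have hc : ℓ (0, 1) < 0 := by
    have := hℓ (x, f x + 1) (by simp [hs])
    have he : ((x, f x + 1) : Evec d × ℝ) = (x, f x) + (0, 1) := by simp
    rw [he, map_add] at this
    linarith
  set c : ℝ := -ℓ (0, 1) with hcdef
  have hcpos : 0 < c := by rw [hcdef]; linarith
  set L : Evec d →L[ℝ] ℝ := (c⁻¹ • ℓ).comp (ContinuousLinearMap.inl ℝ (Evec d) ℝ) with hL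
  refine ⟨(InnerProductSpace.toDual ℝ (Evec d)).symm L, ?_⟩
  intro y
  have key : ∀ ε > 0, ℓ (y, f y + ε) < ℓ (x, f x) := fun ε hε => hℓ _ (by simp [hs, hε])
  have hdecomp : ∀ z : Evec d, ∀ t : ℝ, ℓ (z, t) = ℓ (z, 0) - t * c := by
    intro z t
    have : ((z, t) : Evec d × ℝ) = (z, 0) + t • (0, 1) := by simp
    rw [this, map_add, map_smul, smul_eq_mul, hcdef]
    ring
  have key2 : ℓ (y, 0) - (f y) * c ≤ ℓ (x, 0) - f x * c := by
    by_contra h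
    push_neg at h
    clear_value c
    have hΔ : 0 < ℓ (y,0) - f y * c - (ℓ (x,0) - f x * c) := by linarith
    have hε : 0 < (ℓ (y,0) - f y * c - (ℓ (x,0) - f x * c)) / (2*c) := by positivity
    have hkey := key _ hε
    rw [hdecomp y (f y + (ℓ (y,0) - f y * c - (ℓ (x,0) - f x * c)) / (2*c)),
      hdecomp x (f x)] at hkey
    have hεc : (f y + (ℓ (y,0) - f y * c - (ℓ (x,0) - f x * c)) / (2*c)) * c
        = f y * c + (ℓ (y,0) - f y * c - (ℓ (x,0) - f x * c)) / 2 := by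
      field_simp
    rw [hεc] at hkey
    linarith
  have hip : ip ((InnerProductSpace.toDual ℝ (Evec d)).symm L) (y - x) = L (y - x) := by
    simp [ip, InnerProductSpace.toDual_symm_apply]
  have hsub : ((y, 0) : Evec d × ℝ) - (x, 0) = (y - x, 0) := by simp
  have hLval : L (y - x) = c⁻¹ * ℓ (y - x, 0) := by simp [hL]
  have hℓsub : ℓ (y - x, 0) = ℓ (y, 0) - ℓ (x, 0) := by rw [← map_sub, hsub]
  have hyx : ℓ (y - x, 0) ≤ (f y - f x) * c := by rw [hℓsub]; nlinarith
  rw [hip, hLval]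
  have h2 : c⁻¹ * ℓ (y - x, 0) ≤ f y - f x := by
    rw [inv_mul_le_iff₀ hcpos, mul_comm]
    exact hyx
  linarith

namespace Setup

variable {n d : ℕ} (P : Setup n d)

lemma mem_half (i : Fin n) {x y : Evec d} (hx : x ∈ P.X i) (hy : y ∈ P.X i) :
    (2⁻¹ : ℝ) • (x + y) ∈ P.X i := by
  have := P.hXconv i hx hy (by norm_num : (0:ℝ) ≤ 2⁻¹) (by norm_num : (0:ℝ) ≤ 2⁻¹)
    (by norm_num)
  rw [smul_add]
  exact this

lemma midpoint_ineq (i : Fin n) {x y : Evec d} (hx : x ∈ P.X i) (hy : y ∈ P.X i) :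
    P.f i ((2⁻¹ : ℝ) • (x + y)) ≤ (P.f i x + P.f i y) / 2 - P.θ i / 8 * ‖x - y‖ ^ 2 := by
  obtain ⟨g, hg⟩ := subgrad_exists (P.hfconv i) ((2⁻¹ : ℝ) • (x + y))
  have hz : (2⁻¹ : ℝ) • (x + y) ∈ P.X i := P.mem_half i hx hy
  have h1 := P.hstrong i _ hz x hx g hg
  have h2 := P.hstrong i _ hz y hy g hg
  have e1 : x - (2⁻¹ : ℝ) • (x + y) = (2⁻¹ : ℝ) • (x - y) := by module
  have e2 : y - (2⁻¹ : ℝ) • (x + y) = -((2⁻¹ : ℝ) • (x - y)) := by module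
  rw [e1] at h1
  rw [e2, norm_neg] at h2
  have hnorm : ‖(2⁻¹ : ℝ) • (x - y)‖ ^ 2 = ‖x - y‖ ^ 2 / 4 := by
    rw [norm_smul]
    simp
    ring
  have hipneg : ip g (-((2⁻¹ : ℝ) • (x - y))) = - ip g ((2⁻¹ : ℝ) • (x - y)) := by
    simp [ip, inner_neg_right]
  rw [hnorm] at h1 h2
  rw [hipneg] at h2
  linarith

lemma quad_growth (i : Fin n) (w : Evec d) {y : Evec d} (hy : y ∈ P.X i) :
    ip w y - P.f i y + P.θ i / 4 * ‖y - P.xt i w‖ ^ 2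
      ≤ ip w (P.xt i w) - P.f i (P.xt i w) := by
  have hx : P.xt i w ∈ P.X i := P.hxt_mem i w
  have hm := P.midpoint_ineq i hx hy
  have hz : (2⁻¹ : ℝ) • (P.xt i w + y) ∈ P.X i := P.mem_half i hx hy
  have hopt := P.hxt_max i w _ hz
  have hipz : ip w ((2⁻¹ : ℝ) • (P.xt i w + y)) = (ip w (P.xt i w) + ip w y) / 2 := by
    simp [ip, inner_add_right, inner_smul_right]
    ring
  have hnorm : ‖P.xt i w - y‖ = ‖y - P.xt i w‖ := norm_sub_rev _ _
  rw [hipz] at hopt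
  rw [hnorm] at hm
  linarith

lemma xt_lip (i : Fin n) (w w' : Evec d) :
    ‖P.xt i w - P.xt i w'‖ ≤ 2 / P.θ i * ‖w - w'‖ := by
  have hθ := P.hθ i
  have h1 := P.quad_growth i w (P.hxt_mem i w')
  have h2 := P.quad_growth i w' (P.hxt_mem i w)
  have hn : ‖P.xt i w' - P.xt i w‖ = ‖P.xt i w - P.xt i w'‖ := norm_sub_rev _ _
  rw [hn] at h1
  have hip_expand : ip (w - w') (P.xt i w - P.xt i w')
      = (ip w (P.xt i w) - ip w (P.xt i w')) - (ip w' (P.xt i w) - ip w' (P.xt i w')) := by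
    simp [ip, inner_sub_left, inner_sub_right]
    ring
  have hsum : P.θ i / 2 * ‖P.xt i w - P.xt i w'‖ ^ 2 ≤ ip (w - w') (P.xt i w - P.xt i w') := by
    rw [hip_expand]
    linarith
  have hCS : ip (w - w') (P.xt i w - P.xt i w') ≤ ‖w - w'‖ * ‖P.xt i w - P.xt i w'‖ :=
    real_inner_le_norm _ _
  rcases eq_or_ne (P.xt i w) (P.xt i w') with h | h
  · rw [h]
    simp
    positivity
  · have hpos : 0 < ‖P.xt i w - P.xt i w'‖ := by
      rw [norm_pos_iff, sub_ne_zero]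
      exact h
    have hmul : P.θ i / 2 * ‖P.xt i w - P.xt i w'‖ * ‖P.xt i w - P.xt i w'‖
        ≤ ‖w - w'‖ * ‖P.xt i w - P.xt i w'‖ := by nlinarith
    have h3 : P.θ i / 2 * ‖P.xt i w - P.xt i w'‖ ≤ ‖w - w'‖ :=
      le_of_mul_le_mul_right hmul hpos
    rw [div_mul_eq_mul_div, le_div_iff₀ hθ]
    nlinarith

lemma dconj_le (i : Fin n) (a b : Evec d) :
    P.dconj i (a + b) ≤ P.dconj i a + ip b (P.xt i (a + b)) := by
  have h := P.hxt_max i a (P.xt i (a + b)) (P.hxt_mem i (a + b))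
  have hadd : ip (a + b) (P.xt i (a + b)) = ip a (P.xt i (a + b)) + ip b (P.xt i (a + b)) := by
    simp [ip, inner_add_left]
  unfold dconj
  rw [hadd]
  linarith

end Setup

lemma xbar_eq {n d : ℕ} (P : Setup n d) {w : ENvec n d} (hw : w ∈ Sperp n d)
    (hmin : ∀ v ∈ Sperp n d, P.D w ≤ P.D v) (i j : Fin n) :
    P.xt i (w i) = P.xt j (w j) := by
  rcases eq_or_ne i j with rfl | hij
  · rfl
  have hA : ∀ u : Evec d, 0 ≤ ip u (P.xt i (w i)) - ip u (P.xt j (w j)) := by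
    intro u
    have key : ∀ t : ℝ, 0 < t →
        0 ≤ ip u (P.xt i (w i + t • u)) - ip u (P.xt j (w j - t • u)) := by
      intro t ht
      set v : ENvec n d := WithLp.toLp 2 (fun k => if k = i then u else if k = j then -u else 0) with hv
      have hvmem : v ∈ Sperp n d := by
        show ∑ k, v k = 0
        have : ∀ k, v k = (if k = i then u else 0) + (if k = j then -u else 0) := by
          intro k
          rcases eq_or_ne k i with rfl | hki
          · simp [hv, hij]
          · rcases eq_or_ne k j with rfl | hkj
            · simp [hv, hki]
            · simp [hv, hki, hkj]
        rw [Finset.sum_congr rfl (fun k _ => this k), Finset.sum_add_distrib]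
        simp
      have hwv : w + t • v ∈ Sperp n d :=
        Submodule.add_mem _ hw (Submodule.smul_mem _ t hvmem)
      have h0 : P.D w ≤ P.D (w + t • v) := hmin _ hwv
      have happly : ∀ k, (w + t • v) k = w k + t • v k := fun k => rfl
      have hsum : P.D (w + t • v)
          ≤ P.D w + ∑ k, ip (t • v k) (P.xt k (w k + t • v k)) := by
        unfold Setup.D
        rw [← Finset.sum_add_distrib]
        refine Finset.sum_le_sum (fun k _ => ?_)
        rw [happly k]
        exact P.dconj_le k (w k) (t • v k)
      have hpos : 0 ≤ ∑ k, ip (t • v k) (P.xt k (w k + t • v k)) := by linarith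
      have hterm : ∀ k, ip (t • v k) (P.xt k (w k + t • v k))
          = (if k = i then t * ip u (P.xt i (w i + t • u)) else 0)
            + (if k = j then t * ip (-u) (P.xt j (w j + t • (-u))) else 0) := by
        intro k
        rcases eq_or_ne k i with rfl | hki
        · simp only [hv, if_pos rfl, if_neg hij, eq_self_iff_true, if_true]
          simp only [ip, real_inner_smul_left, eq_self_iff_true, if_true, add_zero]
        · rcases eq_or_ne k j with rfl | hkj
          · simp only [hv, if_neg hki, if_pos rfl, eq_self_iff_true, if_true]
            simp only [ip, real_inner_smul_left, eq_self_iff_true, if_true, zero_add]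
          · simp [hv, hki, hkj, ip]
      rw [Finset.sum_congr rfl (fun k _ => hterm k), Finset.sum_add_distrib] at hpos
      simp only [Finset.sum_ite_eq', Finset.mem_univ, if_pos] at hpos
      have hsub : w j + t • (-u) = w j - t • u := by module
      have hnegu : ip (-u) (P.xt j (w j - t • u)) = - ip u (P.xt j (w j - t • u)) := by
        simp [ip, inner_neg_left]
      rw [hsub, hnegu] at hpos
      have h' : t * 0 ≤ t * (ip u (P.xt i (w i + t • u)) - ip u (P.xt j (w j - t • u))) := by
        rw [mul_zero]
        nlinarith [hpos]
      have := le_of_mul_le_mul_left h' ht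
      linarith
    set C : ℝ := (2 / P.θ i + 2 / P.θ j) * ‖u‖ ^ 2 with hC
    have hCnn : 0 ≤ C := by
      have h1 := (P.hθ i).le
      have h2 := (P.hθ j).le
      positivity
    have hbound : ∀ t : ℝ, 0 < t →
        0 ≤ ip u (P.xt i (w i)) - ip u (P.xt j (w j)) + t * C := by
      intro t ht
      have hk := key t ht
      have hli : ‖P.xt i (w i + t • u) - P.xt i (w i)‖ ≤ 2 / P.θ i * (t * ‖u‖) := by
        have := P.xt_lip i (w i + t • u) (w i)
        have hns : ‖w i + t • u - w i‖ = t * ‖u‖ := by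
          rw [add_sub_cancel_left, norm_smul, Real.norm_eq_abs, abs_of_pos ht]
        rw [hns] at this
        exact this
      have hlj : ‖P.xt j (w j - t • u) - P.xt j (w j)‖ ≤ 2 / P.θ j * (t * ‖u‖) := by
        have := P.xt_lip j (w j - t • u) (w j)
        have hns : ‖w j - t • u - w j‖ = t * ‖u‖ := by
          rw [sub_sub_cancel_left, norm_neg, norm_smul, Real.norm_eq_abs, abs_of_pos ht]
        rw [hns] at this
        exact this
      have hii : ip u (P.xt i (w i + t • u)) - ip u (P.xt i (w i))
          ≤ ‖u‖ * (2 / P.θ i * (t * ‖u‖)) := by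
        have : ip u (P.xt i (w i + t • u)) - ip u (P.xt i (w i))
            = ip u (P.xt i (w i + t • u) - P.xt i (w i)) := by
          simp [ip, inner_sub_right]
        rw [this]
        calc ip u (P.xt i (w i + t • u) - P.xt i (w i))
            ≤ ‖u‖ * ‖P.xt i (w i + t • u) - P.xt i (w i)‖ := real_inner_le_norm _ _
        _ ≤ ‖u‖ * (2 / P.θ i * (t * ‖u‖)) := by
            apply mul_le_mul_of_nonneg_left hli (norm_nonneg _)
      have hjj : ip u (P.xt j (w j)) - ip u (P.xt j (w j - t • u))
          ≤ ‖u‖ * (2 / P.θ j * (t * ‖u‖)) := by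
        have : ip u (P.xt j (w j)) - ip u (P.xt j (w j - t • u))
            = ip u (P.xt j (w j) - P.xt j (w j - t • u)) := by
          simp [ip, inner_sub_right]
        rw [this]
        calc ip u (P.xt j (w j) - P.xt j (w j - t • u))
            ≤ ‖u‖ * ‖P.xt j (w j) - P.xt j (w j - t • u)‖ := real_inner_le_norm _ _
        _ ≤ ‖u‖ * (2 / P.θ j * (t * ‖u‖)) := by
            apply mul_le_mul_of_nonneg_left _ (norm_nonneg _)
            rw [norm_sub_rev]
            exact hlj
      have hCexp : t * C = ‖u‖ * (2 / P.θ i * (t * ‖u‖)) + ‖u‖ * (2 / P.θ j * (t * ‖u‖)) := by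
        rw [hC]
        ring
      rw [hCexp]
      linarith
    have : ∀ ε : ℝ, 0 < ε → 0 ≤ ip u (P.xt i (w i)) - ip u (P.xt j (w j)) + ε := by
      intro ε hε
      have ht : 0 < ε / (C + 1) := by positivity
      have h1 := hbound _ ht
      have h2 : ε / (C + 1) * C ≤ ε := by
        rw [div_mul_eq_mul_div, div_le_iff₀ (by linarith : (0:ℝ) < C + 1)]
        nlinarith
      linarith
    by_contra hcon
    push_neg at hcon
    have := this (-(ip u (P.xt i (w i)) - ip u (P.xt j (w j))) / 2) (by linarith)
    linarith
  have hzero : ∀ u : Evec d, ip u (P.xt i (w i)) - ip u (P.xt j (w j)) = 0 := by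
    intro u
    have h1 := hA u
    have h2 := hA (-u)
    have : ip (-u) (P.xt i (w i)) - ip (-u) (P.xt j (w j))
        = -(ip u (P.xt i (w i)) - ip u (P.xt j (w j))) := by
      simp [ip, inner_neg_left]
      ring
    rw [this] at h2
    linarith
  have hfin := hzero (P.xt i (w i) - P.xt j (w j))
  have : ip (P.xt i (w i) - P.xt j (w j)) (P.xt i (w i) - P.xt j (w j)) = 0 := by
    simp only [ip, inner_sub_right] at hfin ⊢
    linarith
  have h0 : P.xt i (w i) - P.xt j (w j) = 0 := by
    rw [ip] at this
    exact inner_self_eq_zero.mp this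
  rw [sub_eq_zero] at h0
  exact h0

lemma D_le_neg_Fstar {n d : ℕ} (P : Setup n d) {w : ENvec n d} (hw : w ∈ Sperp n d)
    (hmin : ∀ v ∈ Sperp n d, P.D w ≤ P.D v) : P.D w ≤ -P.Fstar := by
  have i0 : Fin n := ⟨0, by have := P.hn; omega⟩
  set xb : Evec d := P.xt i0 (w i0) with hxb
  have hxbi : ∀ i, P.xt i (w i) = xb := fun i => xbar_eq P hw hmin i i0
  have hxbX : xb ∈ ⋂ i, P.X i := by
    refine Set.mem_iInter.mpr (fun i => ?_)
    rw [← hxbi i]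
    exact P.hxt_mem i (w i)
  have hD : P.D w = ∑ i, (ip (w i) xb - P.f i xb) := by
    unfold Setup.D Setup.dconj
    exact Finset.sum_congr rfl (fun i _ => by rw [hxbi i])
  have hsum_ip : ∑ i, ip (w i) xb = 0 := by
    have h1 : ∑ i, ip (w i) xb = ip (∑ i, w i) xb := by
      simp only [ip]
      rw [sum_inner]
    have hw0 : ∑ i, w i = 0 := hw
    rw [h1, hw0]
    simp [ip]
  rw [hD, Finset.sum_sub_distrib, hsum_ip, zero_sub, neg_le_neg_iff]
  exact P.hxstar_min xb hxbX

end Aux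

theorem stmt2 {n d : ℕ} (P : Setup n d) (rc : ℝ) (hrc : 0 < rc)
    (hball : Metric.closedBall (0 : Evec d) rc ⊆ ⋂ i, P.X i) :
    ∀ wstar ∈ Sperp n d, (∀ w ∈ Sperp n d, P.D wstar ≤ P.D w) →
      ‖wstar‖ ≤ ((∑ i, sSup (P.f i '' Metric.closedBall (0 : Evec d) rc)) - P.Fstar) / rc := by
  intro wstar hmem hmin
  classical
  have hDle : P.D wstar ≤ -P.Fstar := D_le_neg_Fstar P hmem hmin
  set M : Fin n → ℝ := fun i => sSup (P.f i '' Metric.closedBall (0 : Evec d) rc) with hM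
  have hcont : ∀ i, Continuous (P.f i) := fun i => (P.hfconv i).locallyLipschitz.continuous
  have hbdd : ∀ i, BddAbove (P.f i '' Metric.closedBall (0 : Evec d) rc) := fun i =>
    (isCompact_closedBall _ _).bddAbove_image (hcont i).continuousOn
  have hlow : ∀ i, rc * ‖wstar i‖ - M i ≤ P.dconj i (wstar i) := by
    intro i
    set xi : Evec d := if h : wstar i = 0 then 0 else (rc / ‖wstar i‖) • wstar i with hxi
    have hxiball : xi ∈ Metric.closedBall (0 : Evec d) rc := by
      rw [Metric.mem_closedBall, dist_zero_right]
      rw [hxi]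
      split
      · simpa using hrc.le
      · rename_i h
        have hn0 : 0 < ‖wstar i‖ := norm_pos_iff.mpr h
        rw [norm_smul, Real.norm_eq_abs, abs_of_pos (div_pos hrc hn0), div_mul_cancel₀]
        exact norm_ne_zero_iff.mpr h
    have hxiX : xi ∈ P.X i := Set.mem_iInter.mp (hball hxiball) i
    have hipxi : ip (wstar i) xi = rc * ‖wstar i‖ := by
      rw [hxi]
      split
      · rename_i h
        simp [ip, h]
      · rename_i h
        rw [ip, real_inner_smul_right, real_inner_self_eq_norm_sq]
        have : ‖wstar i‖ ≠ 0 := norm_ne_zero_iff.mpr h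
        field_simp
    have hfle : P.f i xi ≤ M i := le_csSup (hbdd i) (Set.mem_image_of_mem _ hxiball)
    have := P.hxt_max i (wstar i) xi hxiX
    unfold Setup.dconj
    rw [hipxi] at this
    linarith
  have hDlow : rc * (∑ i, ‖wstar i‖) - (∑ i, M i) ≤ P.D wstar := by
    unfold Setup.D
    rw [Finset.mul_sum, ← Finset.sum_sub_distrib]
    exact Finset.sum_le_sum (fun i _ => hlow i)
  have hnorm : ‖wstar‖ ≤ ∑ i, ‖wstar i‖ := by
    have h2 : ‖wstar‖ ^ 2 = ∑ i, ‖wstar i‖ ^ 2 :=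
      PiLp.norm_sq_eq_of_L2 _ wstar
    have h3 : ∑ i, ‖wstar i‖ ^ 2 ≤ (∑ i, ‖wstar i‖) ^ 2 :=
      Finset.sum_sq_le_sq_sum_of_nonneg (fun i _ => norm_nonneg _)
    have h4 : ‖wstar‖ ^ 2 ≤ (∑ i, ‖wstar i‖) ^ 2 := by rw [h2]; exact h3
    exact le_of_pow_le_pow_left₀ two_ne_zero
      (Finset.sum_nonneg (fun i _ => norm_nonneg _)) h4
  rw [le_div_iff₀ hrc]
  have hF : P.Fstar = ∑ i, P.f i P.xstar := rfl
  have : rc * ‖wstar‖ ≤ rc * (∑ i, ‖wstar i‖) :=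
    mul_le_mul_of_nonneg_left hnorm hrc.le
  calc ‖wstar‖ * rc = rc * ‖wstar‖ := by ring
  _ ≤ rc * (∑ i, ‖wstar i‖) := this
  _ ≤ P.D wstar + ∑ i, M i := by linarith
  _ ≤ (∑ i, M i) - P.Fstar := by linarith
end
end

section
/- Let G be an undirected graph on vertex set {1,…,n} and let L_1,…,L_n > 0. Define the Metropolis weight matrix H ∈ ℝ^{n×n} by H_{ij} = −1/max{deg(i)L_i, deg(j)L_j} if {i,j} is an edge of G, H_{ii} = Σ_{j: {i,j} edge} 1/max{deg(i)L_i, deg(j)L_j}, and H_{ij} = 0 otherwise. Then 2·diag(1/L_1,…,1/L_n) − H is positive semidefinite, i.e., H ⪯ 2 Λ_L^{−1} with Λ_L = diag(L_1,…,L_n). -/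
noncomputable section

open scoped BigOperators

theorem stmt18 {n : ℕ} (hn : 0 < n) (G : SimpleGraph (Fin n)) [DecidableRel G.Adj]
    (L : Fin n → ℝ) (hL : ∀ i, 0 < L i)
    (H : Matrix (Fin n) (Fin n) ℝ)
    (hH : H = Matrix.of fun i j =>
      if i = j then
        ∑ l, (if G.Adj i l then (max ((G.degree i : ℝ) * L i) ((G.degree l : ℝ) * L l))⁻¹ else 0)
      else if G.Adj i j then -(max ((G.degree i : ℝ) * L i) ((G.degree j : ℝ) * L j))⁻¹ else 0) :
    ((2 : ℝ) • Matrix.diagonal (fun i => (L i)⁻¹) - H).PosSemidef := by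
  classical
  set w : Fin n → Fin n → ℝ :=
    fun i j => (max ((G.degree i : ℝ) * L i) ((G.degree j : ℝ) * L j))⁻¹ with hwdef
  have hw0 : ∀ i j, (0 : ℝ) ≤ w i j := by
    intro i j
    apply inv_nonneg.2
    exact le_max_of_le_left (mul_nonneg (Nat.cast_nonneg _) (hL i).le)
  have hwsymm : ∀ i j, w i j = w j i := by
    intro i j; simp [hwdef, max_comm]
  have hwle : ∀ i j, G.Adj i j → w i j ≤ ((G.degree i : ℝ) * L i)⁻¹ := by
    intro i j hij
    have hdeg : 0 < G.degree i := (G.degree_pos_iff_exists_adj i).2 ⟨j, hij⟩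
    have hpos : 0 < (G.degree i : ℝ) * L i :=
      mul_pos (by exact_mod_cast hdeg) (hL i)
    exact inv_anti₀ hpos (le_max_left _ _)
  -- per-vertex bound
  have key : ∀ i, (∑ j, if G.Adj i j then w i j else 0) ≤ (L i)⁻¹ := by
    intro i
    have h1 : (∑ j, if G.Adj i j then w i j else 0)
        ≤ ∑ j, (if G.Adj i j then ((G.degree i : ℝ) * L i)⁻¹ else 0) := by
      apply Finset.sum_le_sum
      intro j _
      by_cases h : G.Adj i j
      · simpa [h] using hwle i j h
      · simp [h]
    have h2 : (∑ j, if G.Adj i j then ((G.degree i : ℝ) * L i)⁻¹ else 0)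
        = (G.degree i : ℝ) * ((G.degree i : ℝ) * L i)⁻¹ := by
      rw [← Finset.sum_filter, Finset.sum_const]
      rw [← SimpleGraph.neighborFinset_eq_filter, SimpleGraph.card_neighborFinset_eq_degree]
      simp [nsmul_eq_mul]
    rcases Nat.eq_zero_or_pos (G.degree i) with hz | hp
    · calc (∑ j, if G.Adj i j then w i j else 0) ≤ _ := h1
        _ = 0 := by rw [h2, hz]; simp
        _ ≤ (L i)⁻¹ := inv_nonneg.2 (hL i).le
    · have hdr : (0:ℝ) < (G.degree i : ℝ) := by exact_mod_cast hp
      calc (∑ j, if G.Adj i j then w i j else 0) ≤ _ := h1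
        _ = (L i)⁻¹ := by rw [h2, mul_inv, ← mul_assoc, mul_inv_cancel₀ hdr.ne', one_mul]
  have hentry : ∀ i j, H i j =
      (if i = j then (∑ l, if G.Adj i l then w i l else 0) else 0)
        + (if G.Adj i j then -(w i j) else 0) := by
    intro i j
    by_cases h : i = j
    · subst h
      simp [hH, hwdef]
    · simp [hH, h, hwdef]
  rw [Matrix.posSemidef_iff_dotProduct_mulVec]
  constructor
  · -- Hermitian
    refine Matrix.IsHermitian.sub ?_ ?_
    · unfold Matrix.IsHermitian
      ext i j
      rw [Matrix.conjTranspose_apply, star_trivial]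
      by_cases h : i = j
      · subst h; rfl
      · simp [Matrix.diagonal, h, Ne.symm h]
    · unfold Matrix.IsHermitian
      ext i j
      rw [Matrix.conjTranspose_apply, star_trivial, hentry, hentry]
      by_cases h : i = j
      · subst h; rfl
      · have : G.Adj i j ↔ G.Adj j i := G.adj_comm i j
        simp [h, Ne.symm h, this, hwsymm i j]
  · intro x
    have hstar : star x = x := by simp
    rw [hstar]
    -- expand quadratic form
    have expand : ∀ (A : Matrix (Fin n) (Fin n) ℝ),
        dotProduct x (A.mulVec x) = ∑ i, ∑ j, x i * A i j * x j := by
      intro A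
      simp [dotProduct, Matrix.mulVec, Finset.mul_sum, mul_assoc]
    rw [expand]
    have hdiagform : ∀ i, (∑ j, x i * (((2:ℝ) • Matrix.diagonal (fun k => (L k)⁻¹)) i j) * x j)
        = 2 * (L i)⁻¹ * x i ^ 2 := by
      intro i
      have : ∀ j, x i * (((2:ℝ) • Matrix.diagonal (fun k => (L k)⁻¹)) i j) * x j
          = if j = i then 2 * (L i)⁻¹ * x i ^ 2 else 0 := by
        intro j
        by_cases h : j = i
        · subst h; simp [Matrix.diagonal]; ring
        · simp [Matrix.diagonal, Ne.symm h, h]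
      rw [Finset.sum_congr rfl fun j _ => this j, Finset.sum_ite_eq']
      simp
    have hHform : ∀ i, (∑ j, x i * H i j * x j)
        = ∑ j, (if G.Adj i j then w i j * (x i ^ 2 - x i * x j) else 0) := by
      intro i
      have step : ∀ j, x i * H i j * x j =
          (if i = j then (∑ l, if G.Adj i l then w i l else 0) * x i ^ 2 else 0)
            + (if G.Adj i j then -(w i j) * (x i * x j) else 0) := by
        intro j
        rw [hentry]
        by_cases h : i = j
        · subst h; by_cases ha : G.Adj i i
          · exact absurd ha (G.irrefl)
          · simp [ha]; ring
        · by_cases ha : G.Adj i j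
          · simp [h, ha]; ring
          · simp [h, ha]
      rw [Finset.sum_congr rfl fun j _ => step j, Finset.sum_add_distrib,
        Finset.sum_ite_eq]
      simp only [Finset.mem_univ, if_pos]
      rw [Finset.sum_mul, ← Finset.sum_add_distrib]
      apply Finset.sum_congr rfl
      intro j _
      by_cases ha : G.Adj i j
      · simp [ha]; ring
      · simp [ha]
    have hsplit : (∑ i, ∑ j, x i * (((2:ℝ) • Matrix.diagonal (fun k => (L k)⁻¹) - H)) i j * x j)
        = (∑ i, 2 * (L i)⁻¹ * x i ^ 2) - ∑ i, ∑ j, x i * H i j * x j := by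
      rw [← Finset.sum_sub_distrib]
      apply Finset.sum_congr rfl
      intro i _
      rw [← hdiagform i, ← Finset.sum_sub_distrib]
      apply Finset.sum_congr rfl
      intro j _
      simp [Matrix.sub_apply]
      ring
    rw [hsplit]
    -- now bound the H quadratic form
    have hbound : (∑ i, ∑ j, x i * H i j * x j) ≤ ∑ i, 2 * (L i)⁻¹ * x i ^ 2 := by
      have step1 : (∑ i, ∑ j, x i * H i j * x j)
          ≤ ∑ i, ∑ j, (if G.Adj i j then w i j * ((3/2) * x i ^ 2 + (1/2) * x j ^ 2) else 0) := by
        apply Finset.sum_le_sum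
        intro i _
        rw [hHform i]
        apply Finset.sum_le_sum
        intro j _
        by_cases ha : G.Adj i j
        · simp only [ha, if_true]
          have hsq := sq_nonneg (x i + x j)
          nlinarith [hw0 i j, sq_nonneg (x i + x j), mul_nonneg (hw0 i j) (sq_nonneg (x i + x j))]
        · simp [ha]
      have hswap : (∑ i, ∑ j, (if G.Adj i j then w i j * x j ^ 2 else 0))
          = ∑ i, ∑ j, (if G.Adj i j then w i j * x i ^ 2 else 0) := by
        rw [Finset.sum_comm]
        apply Finset.sum_congr rfl; intro i _
        apply Finset.sum_congr rfl; intro j _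
        by_cases ha : G.Adj i j
        · have ha' : G.Adj j i := ha.symm
          simp [ha, ha', hwsymm j i]
        · have ha' : ¬ G.Adj j i := fun h => ha h.symm
          simp [ha, ha']
      have step2 : (∑ i, ∑ j, (if G.Adj i j then w i j * ((3/2) * x i ^ 2 + (1/2) * x j ^ 2) else 0))
          = 2 * ∑ i, ∑ j, (if G.Adj i j then w i j * x i ^ 2 else 0) := by
        have e1 : ∀ i j, (if G.Adj i j then w i j * ((3/2) * x i ^ 2 + (1/2) * x j ^ 2) else 0)
            = (3/2) * (if G.Adj i j then w i j * x i ^ 2 else 0)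
              + (1/2) * (if G.Adj i j then w i j * x j ^ 2 else 0) := by
          intro i j; by_cases ha : G.Adj i j <;> simp [ha] <;> ring
        calc (∑ i, ∑ j, (if G.Adj i j then w i j * ((3/2) * x i ^ 2 + (1/2) * x j ^ 2) else 0))
            = (3/2) * (∑ i, ∑ j, (if G.Adj i j then w i j * x i ^ 2 else 0))
              + (1/2) * (∑ i, ∑ j, (if G.Adj i j then w i j * x j ^ 2 else 0)) := by
              simp only [e1, Finset.sum_add_distrib, Finset.mul_sum]
          _ = 2 * ∑ i, ∑ j, (if G.Adj i j then w i j * x i ^ 2 else 0) := by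
              rw [hswap]; ring
      have step3 : (∑ i, ∑ j, (if G.Adj i j then w i j * x i ^ 2 else 0))
          ≤ ∑ i, (L i)⁻¹ * x i ^ 2 := by
        apply Finset.sum_le_sum
        intro i _
        have : (∑ j, (if G.Adj i j then w i j * x i ^ 2 else 0))
            = (∑ j, if G.Adj i j then w i j else 0) * x i ^ 2 := by
          rw [Finset.sum_mul]
          apply Finset.sum_congr rfl
          intro j _; by_cases ha : G.Adj i j <;> simp [ha]
        rw [this]
        exact mul_le_mul_of_nonneg_right (key i) (sq_nonneg _)
      calc (∑ i, ∑ j, x i * H i j * x j) ≤ _ := step1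
        _ = 2 * ∑ i, ∑ j, (if G.Adj i j then w i j * x i ^ 2 else 0) := step2
        _ ≤ 2 * ∑ i, (L i)⁻¹ * x i ^ 2 := by linarith [step3]
        _ = ∑ i, 2 * (L i)⁻¹ * x i ^ 2 := by
              rw [Finset.mul_sum]; exact Finset.sum_congr rfl fun i _ => by ring
    linarith [hbound]
end
end
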